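/- Let f : ℝ^d → ℝ be a square-integrable probability density, let K : ℝ^d → ℝ be integrable with ∫ K = 1, and for a bandwidth vector h ∈ (0,∞)^d let K_h(x) = V_h^{-1} K(x/h) where V_h = ∏_j h_j and division is coordinatewise. Define S_h(x) = ∫ K_h(x − y) f(y) dy, B_h = S_h − f, and T_h(x) = 2K_h(x) − ∫ K_h(v) K_h(x + v) dv. Then ‖f‖₂² = ∬ T_h(x − y) f(x) f(y) dx dy + ∫ B_h(x)² dx. -/

import Mathlib

open MeasureTheory

/-- Rescaled kernel `K_h(x) = V_h⁻¹ K(x/h)` with `V_h = ∏ j, h j` (coordinatewise division). -/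
noncomputable def kerh (d : ℕ) (K : (Fin d → ℝ) → ℝ) (h : Fin d → ℝ) (x : Fin d → ℝ) : ℝ :=
  (∏ j, h j)⁻¹ * K (fun j => x j / h j)

lemma aux_integrable_of_bdd_cs {d : ℕ} {g : (Fin d → ℝ) → ℝ} (hm : Measurable g)
    (hc : HasCompactSupport g) {C : ℝ} (hb : ∀ x, |g x| ≤ C) :
    Integrable g (volume : Measure (Fin d → ℝ)) := by
  have hfin : (volume : Measure (Fin d → ℝ)) (tsupport g) ≠ ⊤ :=
    hc.isCompact.measure_lt_top.ne
  have h1 : IntegrableOn g (tsupport g) volume :=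
    Measure.integrableOn_of_bounded hfin hm.aestronglyMeasurable
      (Filter.Eventually.of_forall fun x => by simpa [Real.norm_eq_abs] using hb x)
  exact (integrableOn_iff_integrable_of_support_subset (subset_tsupport g)).mp h1

variable {d : ℕ}

local notation "E" => (Fin d → ℝ)

lemma main_identity {f g : (Fin d → ℝ) → ℝ} {Cg : ℝ}
    (hfmeas : Measurable f) (hfi : Integrable f (volume : Measure E))
    (hf2 : MemLp f 2 (volume : Measure E))
    (hgmeas : Measurable g) (hgi : Integrable g (volume : Measure E))
    (hgb : ∀ x, |g x| ≤ Cg) :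
    (∫ x, f x ^ 2) =
      (∫ x, ∫ y, (2 * g (x - y) - ∫ v, g v * g ((x - y) + v)) * f x * f y)
        + ∫ x, ((∫ y, g (x - y) * f y) - f x) ^ 2 := by
  have hCg : 0 ≤ Cg := le_trans (abs_nonneg _) (hgb 0)
  set Mf : ℝ := ∫ y, |f y| with hMf
  set Mg : ℝ := ∫ y, |g y| with hMg
  set S : (Fin d → ℝ) → ℝ := fun x => ∫ y, g (x - y) * f y with hS
  set Cn : (Fin d → ℝ) → ℝ := fun u => ∫ v, g v * g (u + v) with hCn
  set SC : (Fin d → ℝ) → ℝ := fun x => ∫ y, Cn (x - y) * f y with hSC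
  -- measurability
  have hSmeas : StronglyMeasurable S := by
    apply StronglyMeasurable.integral_prod_right' (f := fun p : E × E => g (p.1 - p.2) * f p.2)
    exact ((hgmeas.comp measurable_sub).mul (hfmeas.comp measurable_snd)).stronglyMeasurable
  have hCnmeas : StronglyMeasurable Cn := by
    apply StronglyMeasurable.integral_prod_right' (f := fun p : E × E => g p.2 * g (p.1 + p.2))
    exact ((hgmeas.comp measurable_snd).mul (hgmeas.comp measurable_add)).stronglyMeasurable
  have hSCmeas : StronglyMeasurable SC := by
    apply StronglyMeasurable.integral_prod_right' (f := fun p : E × E => Cn (p.1 - p.2) * f p.2)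
    exact ((hCnmeas.measurable.comp measurable_sub).mul
      (hfmeas.comp measurable_snd)).stronglyMeasurable
  -- bounds
  have hSb : ∀ x, |S x| ≤ Cg * Mf := by
    intro x
    have h1 : ‖∫ y, g (x - y) * f y‖ ≤ ∫ y, Cg * |f y| := by
      apply norm_integral_le_of_norm_le (hfi.abs.const_mul Cg)
      refine Filter.Eventually.of_forall fun y => ?_
      rw [Real.norm_eq_abs, abs_mul]
      exact mul_le_mul_of_nonneg_right (hgb _) (abs_nonneg _)
    rw [integral_const_mul] at h1
    simpa [hS, Real.norm_eq_abs] using h1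
  have hCnb : ∀ u, |Cn u| ≤ Mg * Cg := by
    intro u
    have h1 : ‖∫ v, g v * g (u + v)‖ ≤ ∫ v, |g v| * Cg := by
      apply norm_integral_le_of_norm_le (hgi.abs.mul_const Cg)
      refine Filter.Eventually.of_forall fun v => ?_
      rw [Real.norm_eq_abs, abs_mul]
      exact mul_le_mul_of_nonneg_left (hgb _) (abs_nonneg _)
    rw [integral_mul_const] at h1
    simpa [hCn, Real.norm_eq_abs] using h1
  have hSCb : ∀ x, |SC x| ≤ Mg * Cg * Mf := by
    intro x
    have h1 : ‖∫ y, Cn (x - y) * f y‖ ≤ ∫ y, (Mg * Cg) * |f y| := by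
      apply norm_integral_le_of_norm_le (hfi.abs.const_mul _)
      refine Filter.Eventually.of_forall fun y => ?_
      rw [Real.norm_eq_abs, abs_mul]
      exact mul_le_mul_of_nonneg_right (hCnb _) (abs_nonneg _)
    rw [integral_const_mul] at h1
    simpa [hSC, Real.norm_eq_abs] using h1
  -- product integrability
  have hP : Integrable (fun p : E × E => g (p.1 - p.2) * f p.2)
      ((volume : Measure E).prod volume) := by
    have := hfi.convolution_integrand (ContinuousLinearMap.mul ℝ ℝ) hgi
    simpa [mul_comm] using this
  have hSint : Integrable S (volume : Measure E) := by
    have := hP.integral_prod_left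
    simpa [hS] using this
  -- translation identity
  have htrans : ∀ y z : (Fin d → ℝ), (∫ x, g (x - y) * g (x - z)) = Cn (y - z) := by
    intro y z
    have h1 := MeasureTheory.integral_add_right_eq_self
      (μ := (volume : Measure E)) (fun x => g (x - y) * g (x - z)) y
    rw [← h1]
    simp only [add_sub_cancel_right, hCn]
    apply integral_congr_ae
    refine Filter.Eventually.of_forall fun v => ?_
    show g v * g (v + y - z) = g v * g (y - z + v)
    rw [show v + y - z = y - z + v by abel]
  -- Fubini 1 integrand
  have hFub1 : Integrable (fun p : E × E => S p.1 * (g (p.1 - p.2) * f p.2))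
      ((volume : Measure E).prod volume) :=
    hP.bdd_mul ((hSmeas.comp_measurable measurable_fst).aestronglyMeasurable)
      (c := Cg * Mf) (Filter.Eventually.of_forall fun p => by simpa [Real.norm_eq_abs] using hSb p.1)
  have hJ : ∀ y, (∫ x, S x * g (x - y)) = ∫ z, Cn (y - z) * f z := by
    intro y
    have hFub2 : Integrable (fun p : E × E => g (p.1 - y) * (g (p.1 - p.2) * f p.2))
        ((volume : Measure E).prod volume) :=
      hP.bdd_mul ((hgmeas.comp (measurable_fst.sub measurable_const)).aestronglyMeasurable)
        (c := Cg) (Filter.Eventually.of_forall fun p => by simpa [Real.norm_eq_abs] using hgb (p.1 - y))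
    have step1 : (∫ x, S x * g (x - y)) = ∫ x, ∫ z, g (x - y) * (g (x - z) * f z) := by
      apply integral_congr_ae; refine .of_forall fun x => ?_
      show S x * g (x - y) = ∫ z, g (x - y) * (g (x - z) * f z)
      rw [integral_const_mul]
      exact mul_comm (S x) (g (x - y))
    have step2 := integral_integral_swap
      (f := fun x z => g (x - y) * (g (x - z) * f z)) hFub2
    rw [step1, step2]
    apply integral_congr_ae; refine .of_forall fun z => ?_
    show (∫ x, g (x - y) * (g (x - z) * f z)) = Cn (y - z) * f z
    calc ∫ x, g (x - y) * (g (x - z) * f z) = ∫ x, (g (x - y) * g (x - z)) * f z := by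
          simp only [mul_assoc]
      _ = (∫ x, g (x - y) * g (x - z)) * f z := by rw [integral_mul_const]
      _ = Cn (y - z) * f z := by rw [htrans]
  have hSsq : (∫ x, S x * S x) = ∫ y, SC y * f y := by
    have step1 : (∫ x, S x * S x) = ∫ x, ∫ y, S x * (g (x - y) * f y) := by
      apply integral_congr_ae; refine .of_forall fun x => ?_
      show S x * S x = ∫ y, S x * (g (x - y) * f y)
      rw [integral_const_mul]
    rw [step1, integral_integral_swap hFub1]
    apply integral_congr_ae; refine .of_forall fun y => ?_
    show (∫ x, S x * (g (x - y) * f y)) = SC y * f y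
    calc ∫ x, S x * (g (x - y) * f y) = ∫ x, (S x * g (x - y)) * f y := by
          simp only [mul_assoc]
      _ = (∫ x, S x * g (x - y)) * f y := by rw [integral_mul_const]
      _ = SC y * f y := by rw [hJ]
  -- pointwise inner integrals
  have hinner_g : ∀ x, (∫ y, g (x - y) * f x * f y) = S x * f x := by
    intro x
    calc (∫ y, g (x - y) * f x * f y) = ∫ y, f x * (g (x - y) * f y) := by
          apply integral_congr_ae; refine .of_forall fun y => ?_
          show g (x - y) * f x * f y = f x * (g (x - y) * f y); ring
      _ = f x * S x := by rw [integral_const_mul]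
      _ = S x * f x := mul_comm _ _
  have hinner_C : ∀ x, (∫ y, Cn (x - y) * f x * f y) = SC x * f x := by
    intro x
    calc (∫ y, Cn (x - y) * f x * f y) = ∫ y, f x * (Cn (x - y) * f y) := by
          apply integral_congr_ae; refine .of_forall fun y => ?_
          show Cn (x - y) * f x * f y = f x * (Cn (x - y) * f y); ring
      _ = f x * SC x := by rw [integral_const_mul]
      _ = SC x * f x := mul_comm _ _
  -- per-x integrability
  have hintx_g : ∀ x, Integrable (fun y => g (x - y) * f x * f y) (volume : Measure E) :=
    fun x =>
    hfi.bdd_mul (((hgmeas.comp (measurable_const.sub measurable_id)).mul_const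
        (f x)).aestronglyMeasurable)
      (c := Cg * |f x|) (Filter.Eventually.of_forall fun y => by
        rw [Real.norm_eq_abs, abs_mul]
        exact mul_le_mul_of_nonneg_right (hgb _) (abs_nonneg _))
  have hintx_C : ∀ x, Integrable (fun y => Cn (x - y) * f x * f y) (volume : Measure E) :=
    fun x =>
    hfi.bdd_mul (((hCnmeas.measurable.comp (measurable_const.sub measurable_id)).mul_const
        (f x)).aestronglyMeasurable)
      (c := Mg * Cg * |f x|) (Filter.Eventually.of_forall fun y => by
        rw [Real.norm_eq_abs, abs_mul]
        exact mul_le_mul_of_nonneg_right (hCnb _) (abs_nonneg _))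
  -- outer integrability
  have hSf : Integrable (fun x => S x * f x) (volume : Measure E) :=
    hfi.bdd_mul hSmeas.aestronglyMeasurable
      (c := Cg * Mf) (Filter.Eventually.of_forall fun x => by simpa [Real.norm_eq_abs] using hSb x)
  have hSCf : Integrable (fun x => SC x * f x) (volume : Measure E) :=
    hfi.bdd_mul hSCmeas.aestronglyMeasurable
      (c := Mg * Cg * Mf) (Filter.Eventually.of_forall fun x => by simpa [Real.norm_eq_abs] using hSCb x)
  have hSS : Integrable (fun x => S x * S x) (volume : Measure E) :=
    hSint.bdd_mul hSmeas.aestronglyMeasurable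
      (c := Cg * Mf) (Filter.Eventually.of_forall fun x => by simpa [Real.norm_eq_abs] using hSb x)
  have hfsq : Integrable (fun x => f x ^ 2) (volume : Measure E) := hf2.integrable_sq
  -- the A term
  have hA : (∫ x, ∫ y, (2 * g (x - y) - ∫ v, g v * g ((x - y) + v)) * f x * f y)
      = 2 * (∫ x, S x * f x) - ∫ x, SC x * f x := by
    have step1 : ∀ x, (∫ y, (2 * g (x - y) - Cn (x - y)) * f x * f y)
        = 2 * (S x * f x) - SC x * f x := by
      intro x
      have e : (fun y => (2 * g (x - y) - Cn (x - y)) * f x * f y)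
          = fun y => 2 * (g (x - y) * f x * f y) - Cn (x - y) * f x * f y := by
        funext y; ring
      have h1 : Integrable (fun y => 2 * (g (x - y) * f x * f y)) (volume : Measure E) :=
        (hintx_g x).const_mul 2
      rw [e, integral_sub h1 (hintx_C x), integral_const_mul, hinner_g, hinner_C]
    calc (∫ x, ∫ y, (2 * g (x - y) - ∫ v, g v * g ((x - y) + v)) * f x * f y)
        = ∫ x, (2 * (S x * f x) - SC x * f x) := by
          apply integral_congr_ae; refine .of_forall fun x => ?_
          exact step1 x
      _ = 2 * (∫ x, S x * f x) - ∫ x, SC x * f x := by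
          have h1 : Integrable (fun x => 2 * (S x * f x)) (volume : Measure E) :=
            hSf.const_mul 2
          rw [integral_sub h1 hSCf, integral_const_mul]
  -- the B term
  have hB : (∫ x, ((∫ y, g (x - y) * f y) - f x) ^ 2)
      = (∫ x, S x * S x) - 2 * (∫ x, S x * f x) + ∫ x, f x ^ 2 := by
    have e : (fun x => ((∫ y, g (x - y) * f y) - f x) ^ 2)
        = fun x => S x * S x - 2 * (S x * f x) + f x ^ 2 := by
      funext x
      show (S x - f x) ^ 2 = _
      ring
    have h2 : Integrable (fun x => 2 * (S x * f x)) (volume : Measure E) := hSf.const_mul 2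
    have h1 : Integrable (fun x => S x * S x - 2 * (S x * f x)) (volume : Measure E) :=
      hSS.sub h2
    rw [e, integral_add h1 hfsq, integral_sub hSS h2, integral_const_mul]
  rw [hA, hB, hSsq]
  ring

/-- The `L₂`-norm identity
`‖f‖₂² = ∬ T_h(x−y) f(x) f(y) dx dy + ∫ B_h(x)² dx`,
with `T_h(x) = 2K_h(x) − ∫ K_h(v)K_h(x+v) dv`, `S_h = K_h ⋆ f` and `B_h = S_h − f`. -/
theorem stmt3 (d : ℕ) (f K : (Fin d → ℝ) → ℝ) (h : Fin d → ℝ) (hh : ∀ j, 0 < h j)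
    (hfmeas : Measurable f) (hfnn : ∀ x, 0 ≤ f x) (hf1 : ∫ x, f x = 1)
    (hf2 : MemLp f 2 (volume : Measure (Fin d → ℝ)))
    (hKmeas : Measurable K) (hKbdd : ∃ C, ∀ x, |K x| ≤ C) (hKsupp : HasCompactSupport K)
    (hK1 : ∫ x, K x = 1) :
    (∫ x, f x ^ 2) =
      (∫ x, ∫ y,
          (2 * kerh d K h (x - y) - ∫ v, kerh d K h v * kerh d K h ((x - y) + v)) * f x * f y)
        + ∫ x, ((∫ y, kerh d K h (x - y) * f y) - f x) ^ 2 := by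
  obtain ⟨CK, hCK⟩ := hKbdd
  have hfi : Integrable f (volume : Measure (Fin d → ℝ)) := by
    by_contra hc
    rw [integral_undef hc] at hf1
    exact one_ne_zero hf1.symm
  have hgmeas : Measurable (kerh d K h) := by
    have hmapmeas : Measurable fun x : Fin d → ℝ => (fun j => x j / h j) :=
      measurable_pi_lambda _ fun j => (measurable_pi_apply j).div_const _
    exact measurable_const.mul (hKmeas.comp hmapmeas)
  have hgsupp : HasCompactSupport (kerh d K h) := by
    let φ : (Fin d → ℝ) ≃ₜ (Fin d → ℝ) :=
      Homeomorph.piCongrRight fun j => Homeomorph.mulRight₀ (h j)⁻¹ (inv_ne_zero (hh j).ne')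
    have h1 : HasCompactSupport (K ∘ φ) := hKsupp.comp_homeomorph φ
    have h2 : kerh d K h = fun x => (∏ j, h j)⁻¹ * (K ∘ φ) x := by
      funext x
      simp only [kerh, Function.comp, φ, Homeomorph.piCongrRight, Homeomorph.mulRight₀,
        div_eq_mul_inv]
      rfl
    rw [h2]
    exact h1.mul_left
  have hgb : ∀ x, |kerh d K h x| ≤ |(∏ j, h j)⁻¹| * CK := by
    intro x
    rw [kerh, abs_mul]
    exact mul_le_mul_of_nonneg_left (hCK _) (abs_nonneg _)
  have hgi : Integrable (kerh d K h) (volume : Measure (Fin d → ℝ)) :=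
    aux_integrable_of_bdd_cs hgmeas hgsupp hgb
  exact main_identity hfmeas hfi hf2 hgmeas hgi hgb
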